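/- Variable Normal Form: there is a constant C such that for every PETS(Ax) derivation 𝒟 of an equation t = u there exists a derivation 𝒟′ of t = u in Variable Normal Form with lh(𝒟′) ≤ C · lh(𝒟)², where Variable Normal Form means: (1) every application of the Axiom rule concludes an injective renaming of an equation in Ax (so its left-hand side is f(t⃗) with each tᵢ a generalized variable and no variable shared between distinct tᵢ); (2) every variable occurring in the derivation either occurs in the final equation or is bound by exactly one application of the Substitution rule. -/

import Mathlib

namespace PETS

/-! ## Approximate values -/

/-- The set `𝔻` of approximate values: binary strings plus `*` (unknown). -/
inductive D where
  | eps  : D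
  | b0   : D → D
  | b1   : D → D
  | star : D
deriving DecidableEq

instance : Zero D := ⟨D.star⟩

/-- The approximation relation `⊑` on `𝔻`. -/
inductive Approx : D → D → Prop where
  | star (v : D) : Approx .star v
  | eps : Approx .eps .eps
  | b0 {v w : D} : Approx v w → Approx (.b0 v) (.b0 w)
  | b1 {v w : D} : Approx v w → Approx (.b1 v) (.b1 w)

/-- Componentwise extension of `⊑` to tuples. -/
def TApprox {n : ℕ} (u v : Fin n → D) : Prop := ∀ i, Approx (u i) (v i)

/-- Compatibility `u △ v`. -/
def Compat (u v : D) : Prop := Approx u v ∨ Approx v u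

/-- Componentwise compatibility of tuples. -/
def TCompat {n : ℕ} (u v : Fin n → D) : Prop := ∀ i, Compat (u i) (v i)

/-- The gauge `G(v)` of an approximate value. -/
def D.gauge : D → ℕ
  | .eps => 1
  | .star => 1
  | .b0 v => v.gauge + 1
  | .b1 v => v.gauge + 1

/-- The gauge of a tuple of approximate values. -/
def tupGauge {n : ℕ} (v : Fin n → D) : ℕ := Finset.univ.sup fun i => (v i).gauge

open Classical in
/-- `maxapprx S`: the `⊑`-greatest element of `S` if it exists, else `*`.
In particular `maxapprx ∅ = *`. -/
noncomputable def maxapprx (S : Set D) : D :=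
  if h : ∃ m, m ∈ S ∧ ∀ v ∈ S, Approx v m then h.choose else D.star

/-! ## Generators and consistent sets -/

/-- A finite set of (potential) generators for `𝔻^n → 𝔻`. -/
abbrev Gens (n : ℕ) := Finset ((Fin n → D) × D)

/-- `f` is a consistent set of generators for `𝔻^n → 𝔻`:
all values are `≠ *` and compatible arguments have compatible values. -/
def ConsistentGens {n : ℕ} (f : Gens n) : Prop :=
  (∀ p ∈ f, p.2 ≠ D.star) ∧
  ∀ p ∈ f, ∀ q ∈ f, TCompat p.1 q.1 → Compat p.2 q.2

/-- `f[x] = { v | ∃ w ⊑ x, (w ↦ v) ∈ f }`. -/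
def gensAt {n : ℕ} (f : Gens n) (x : Fin n → D) : Set D :=
  {v | ∃ w : Fin n → D, TApprox w x ∧ (w, v) ∈ f}

/-- The finitely generated map `f(x) = maxapprx f[x]`. -/
noncomputable def applyGens {n : ℕ} (f : Gens n) (x : Fin n → D) : D :=
  maxapprx (gensAt f x)

/-! ## Terms -/

/-- Terms over the language: variables, the basic symbols `ε`, `s₀`, `s₁`, and
countably many non-basic function symbols `op k` of each arity `a`
(a non-basic symbol is identified by the pair `(k, a)`). -/
inductive Tm where
  | var : ℕ → Tm
  | eps : Tm
  | s0 : Tm → Tm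
  | s1 : Tm → Tm
  | app : (k : ℕ) → (a : ℕ) → (Fin a → Tm) → Tm

/-- The length (number of symbols) of a term. -/
def Tm.lh : Tm → ℕ
  | .var _ => 1
  | .eps => 1
  | .s0 t => t.lh + 1
  | .s1 t => t.lh + 1
  | .app _ a args => (Finset.univ.sum fun i : Fin a => (args i).lh) + 1

/-- The set of variables occurring in a term. -/
def Tm.vars : Tm → Finset ℕ
  | .var x => {x}
  | .eps => ∅
  | .s0 t => t.vars
  | .s1 t => t.vars
  | .app _ a args => Finset.univ.biUnion fun i : Fin a => (args i).vars

/-- Substitution `t[u/x]` of the term `u` for the variable `x` in `t`. -/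
def Tm.subst (t : Tm) (x : ℕ) (u : Tm) : Tm :=
  match t with
  | .var y => if y = x then u else .var y
  | .eps => .eps
  | .s0 s => .s0 (s.subst x u)
  | .s1 s => .s1 (s.subst x u)
  | .app k a args => .app k a fun i => (args i).subst x u

/-- Simultaneous substitution of terms for all variables. -/
def Tm.msubst (σ : ℕ → Tm) : Tm → Tm
  | .var x => σ x
  | .eps => .eps
  | .s0 t => .s0 (t.msubst σ)
  | .s1 t => .s1 (t.msubst σ)
  | .app k a args => .app k a fun i => (args i).msubst σ

/-! ## Frames and assignments -/

/-- An entry of a frame: a non-basic symbol `(k, a)` together with a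
generator `(arg, out)` for `𝔻^a → 𝔻`. -/
abbrev Entry := Σ _k : ℕ, Σ a : ℕ, (Fin a → D) × D

/-- A frame: a finite set of entries, i.e. a finite partial map from
non-basic function symbols to finite sets of generators. -/
abbrev Frame := Finset Entry

/-- `F(f)[x]` for the symbol `f = (k, a)`:
the set `{ v | ∃ w ⊑ x, (w ↦ v) ∈ F(f) }`. -/
def Frame.setAt (F : Frame) (k a : ℕ) (x : Fin a → D) : Set D :=
  {v | ∃ w : Fin a → D, TApprox w x ∧ (⟨k, a, (w, v)⟩ : Entry) ∈ F}

/-- The evaluation `F(f)(x)` of the finitely generated map of the non-basic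
symbol `f = (k, a)` in the frame `F`. -/
noncomputable def Frame.app (F : Frame) (k a : ℕ) (x : Fin a → D) : D :=
  maxapprx (F.setAt k a x)

/-- The gauge of a frame entry. -/
def Entry.gauge (e : Entry) : ℕ := max (tupGauge e.2.2.1) e.2.2.2.gauge

/-- The gauge `G(F)` of a frame. -/
def Frame.gauge (F : Frame) : ℕ := F.sup Entry.gauge

/-- A frame is consistent if each of its sections is a consistent set of
generators (values `≠ *`, compatible arguments have compatible values). -/
def Frame.Consistent (F : Frame) : Prop :=
  (∀ (k a : ℕ) (w : Fin a → D) (v : D), (⟨k, a, (w, v)⟩ : Entry) ∈ F → v ≠ D.star) ∧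
  (∀ (k a : ℕ) (w w' : Fin a → D) (v v' : D),
    (⟨k, a, (w, v)⟩ : Entry) ∈ F → (⟨k, a, (w', v')⟩ : Entry) ∈ F →
    TCompat w w' → Compat v v')

/-- An assignment: a finitely supported map from variables to `𝔻`
(where the zero of `𝔻` is `*`, i.e. `ρ(x) = *` outside the domain). -/
abbrev Assignment := ℕ →₀ D

/-- The gauge `G(ρ)` of an assignment. -/
noncomputable def Assignment.gauge (ρ : Assignment) : ℕ :=
  ρ.support.sup fun x => (ρ x).gauge

/-- The evaluation `⟦t⟧_{F,ρ}` of a term under a frame and an assignment: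
basic symbols are evaluated as themselves, non-basic symbols via their
finitely generated maps. -/
noncomputable def eval (F : Frame) (ρ : Assignment) : Tm → D
  | .var x => ρ x
  | .eps => D.eps
  | .s0 t => D.b0 (eval F ρ t)
  | .s1 t => D.b1 (eval F ρ t)
  | .app k a args => F.app k a fun i => eval F ρ (args i)

/-! ## Nice axiom systems -/

/-- A generalized variable: a variable, `ε`, `s₀(x)` or `s₁(x)`. -/
inductive GVar where
  | var : ℕ → GVar
  | eps : GVar
  | s0 : ℕ → GVar
  | s1 : ℕ → GVar
deriving DecidableEq

/-- The term denoted by a generalized variable. -/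
def GVar.toTm : GVar → Tm
  | .var x => .var x
  | .eps => .eps
  | .s0 x => .s0 (.var x)
  | .s1 x => .s1 (.var x)

/-- The variables of a generalized variable. -/
def GVar.vars : GVar → Finset ℕ
  | .var x => {x}
  | .eps => ∅
  | .s0 x => {x}
  | .s1 x => {x}

/-- Applying an assignment to a generalized variable,
e.g. `ρ(sᵢ(x)) = sᵢ(ρ(x))`. -/
def GVar.evalA (ρ : Assignment) : GVar → D
  | .var x => ρ x
  | .eps => D.eps
  | .s0 x => D.b0 (ρ x)
  | .s1 x => D.b1 (ρ x)

/-- Unifiability of two generalized variables (they have a common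
substitution instance). -/
def GVar.unif : GVar → GVar → Prop
  | .var _, _ => True
  | _, .var _ => True
  | .eps, .eps => True
  | .s0 _, .s0 _ => True
  | .s1 _, .s1 _ => True
  | _, _ => False

/-- An axiom: an equation `f(t₁,…,tₐ) = rhs` where `f` is the non-basic
symbol `(k, a)` and each `tᵢ` is a generalized variable. -/
structure Axm where
  k : ℕ
  a : ℕ
  args : Fin a → GVar
  rhs : Tm

/-- The left-hand side term `f(t₁,…,tₐ)` of an axiom. -/
def Axm.lhs (A : Axm) : Tm := .app A.k A.a fun i => (A.args i).toTm

/-- The variables of the left-hand side of an axiom. -/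
def Axm.lhsVars (A : Axm) : Finset ℕ := Finset.univ.biUnion fun i => (A.args i).vars

/-- All variables of an axiom. -/
def Axm.vars (A : Axm) : Finset ℕ := A.lhsVars ∪ A.rhs.vars

/-- A nice set of axioms: each axiom has the form `f(x⃗) = t`, `f(ε,x⃗) = t`,
`f(x0,x⃗) = t` or `f(x1,x⃗) = t` (so all arguments beyond the first are plain
variables), the variables on the left are pairwise distinct, the right-hand
side variables occur on the left, and no left-hand side occurs twice among
the axioms, also modulo substitution. -/
structure NiceAxioms (Ax : Set Axm) : Prop where
  shape : ∀ A ∈ Ax, ∀ i : Fin A.a, 0 < (i : ℕ) → ∃ x, A.args i = GVar.var x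
  distinct : ∀ A ∈ Ax, ∀ i j : Fin A.a, i ≠ j → Disjoint ((A.args i).vars) ((A.args j).vars)
  rhsVars : ∀ A ∈ Ax, A.rhs.vars ⊆ A.lhsVars
  unique : ∀ A ∈ Ax, ∀ B ∈ Ax, A.k = B.k → ∀ h : A.a = B.a,
    (∀ i : Fin A.a, GVar.unif (A.args i) (B.args (Fin.cast h i))) → A = B

/-! ## Derivations in PETS(Ax) -/

/-- Derivations of the pure equational theory with substitution `PETS(Ax)`:
`Deriv Ax t u` is the type of derivations ending in the equation `t = u`. -/
inductive Deriv (Ax : Set Axm) : Tm → Tm → Type where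
  | ax (A : Axm) (hA : A ∈ Ax) (σ : ℕ → Tm) :
      Deriv Ax (A.lhs.msubst σ) (A.rhs.msubst σ)
  | refl (t : Tm) : Deriv Ax t t
  | symm {t u : Tm} (d : Deriv Ax u t) : Deriv Ax t u
  | trans {t s u : Tm} (d₁ : Deriv Ax t s) (d₂ : Deriv Ax s u) : Deriv Ax t u
  | compat {t u : Tm} (s : Tm) (x : ℕ) (d : Deriv Ax t u) :
      Deriv Ax (s.subst x t) (s.subst x u)
  | subst {t u : Tm} (s : Tm) (x : ℕ) (d : Deriv Ax t u) :
      Deriv Ax (t.subst x s) (u.subst x s)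

namespace Deriv

variable {Ax : Set Axm}

/-- The length `lh(𝒟)` of a derivation: the sum of the lengths of the
equations occurring in it plus the length of the additional syntax
identifying rule applications. -/
def lh : {a b : Tm} → Deriv Ax a b → ℕ
  | _, _, .ax A _ σ => (A.lhs.msubst σ).lh + (A.rhs.msubst σ).lh + 1
  | _, _, .refl t => t.lh + t.lh + 1
  | a, b, .symm d => d.lh + (a.lh + b.lh + 1)
  | a, b, .trans d₁ d₂ => d₁.lh + d₂.lh + (a.lh + b.lh + 1)
  | _, _, @Deriv.compat _ t u s x d =>
      d.lh + ((s.subst x t).lh + (s.subst x u).lh + 1) + (s.lh + 1 + 1)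
  | _, _, @Deriv.subst _ t u s x d =>
      d.lh + ((t.subst x s).lh + (u.subst x s).lh + 1)
        + (t.lh + s.lh + 1 + u.lh + s.lh + 1 + 2)

/-- The set of variables occurring in a derivation. -/
def varsOf : {a b : Tm} → Deriv Ax a b → Finset ℕ
  | _, _, .ax A _ σ => (A.lhs.msubst σ).vars ∪ (A.rhs.msubst σ).vars
  | _, _, .refl t => t.vars
  | _, _, .symm d => d.varsOf
  | _, _, .trans d₁ d₂ => d₁.varsOf ∪ d₂.varsOf
  | _, _, @Deriv.compat _ _ _ s x d => d.varsOf ∪ s.vars ∪ {x}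
  | _, _, @Deriv.subst _ _ _ s x d => d.varsOf ∪ s.vars ∪ {x}

/-- The list (with multiplicities) of variables of a derivation bound by
applications of the Substitution rule. -/
def bvars : {a b : Tm} → Deriv Ax a b → List ℕ
  | _, _, .ax _ _ _ => []
  | _, _, .refl _ => []
  | _, _, .symm d => d.bvars
  | _, _, .trans d₁ d₂ => d₁.bvars ++ d₂.bvars
  | _, _, .compat _ _ d => d.bvars
  | _, _, @Deriv.subst _ _ _ _ x d => x :: d.bvars

/-- The set of axioms of `Ax` occurring (i.e. used by an Axiom rule) in a
derivation. -/
def axiomsUsed : {a b : Tm} → Deriv Ax a b → Set Axm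
  | _, _, .ax A _ _ => {A}
  | _, _, .refl _ => ∅
  | _, _, .symm d => d.axiomsUsed
  | _, _, .trans d₁ d₂ => d₁.axiomsUsed ∪ d₂.axiomsUsed
  | _, _, .compat _ _ d => d.axiomsUsed
  | _, _, .subst _ _ d => d.axiomsUsed

/-- A substitution is an injective renaming of the variables of an axiom. -/
def InjRenaming (A : Axm) (σ : ℕ → Tm) : Prop :=
  (∀ x ∈ A.vars, ∃ y, σ x = Tm.var y) ∧ Set.InjOn σ ↑A.vars

/-- Condition (1) of Variable Normal Form: every application of the Axiom
rule is an injective renaming of an axiom. -/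
def VNFax : {a b : Tm} → Deriv Ax a b → Prop
  | _, _, .ax A _ σ => InjRenaming A σ
  | _, _, .refl _ => True
  | _, _, .symm d => d.VNFax
  | _, _, .trans d₁ d₂ => d₁.VNFax ∧ d₂.VNFax
  | _, _, .compat _ _ d => d.VNFax
  | _, _, .subst _ _ d => d.VNFax

/-- Variable Normal Form: every Axiom rule application is an injective
renaming of an axiom in `Ax`, and every variable occurring in the derivation
either occurs in the final equation or is bound by exactly one application
of the Substitution rule. -/
def VNF {a b : Tm} (d : Deriv Ax a b) : Prop :=
  d.VNFax ∧ ∀ x ∈ d.varsOf, x ∈ a.vars ∪ b.vars ∨ d.bvars.count x = 1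

end Deriv

/-! ## Models, updates, update sequences -/

/-- `F` is a model of `Ax`: for every axiom `t = u` in `Ax` and every
assignment `ρ`, `⟦t⟧_{F,ρ} ⊑ ⟦u⟧_{F,ρ}`. -/
def IsModel (F : Frame) (Ax : Set Axm) : Prop :=
  ∀ A ∈ Ax, ∀ ρ : Assignment, Approx (eval F ρ A.lhs) (eval F ρ A.rhs)

/-- `F` is a `κ`-model of the derivation `d`: `F` is a frame (its sections
are consistent sets) with `G(F) ≤ κ`, and for every axiom `t = u` of `Ax`
occurring in `d` and every assignment `ρ` with `dom(ρ) ⊆ var(d)` and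
`G(ρ) ≤ κ`, we have `⟦t⟧_{F,ρ} ⊑ ⟦u⟧_{F,ρ}`. -/
def IsKModel {Ax : Set Axm} {a b : Tm} (F : Frame) (κ : ℕ) (d : Deriv Ax a b) : Prop :=
  F.Consistent ∧ F.gauge ≤ κ ∧
  ∀ A ∈ d.axiomsUsed, ∀ ρ : Assignment,
    ↑ρ.support ⊆ (↑d.varsOf : Set ℕ) → ρ.gauge ≤ κ →
    Approx (eval F ρ A.lhs) (eval F ρ A.rhs)

/-- An update `f : v⃗ ↦ w` for the non-basic symbol `f = (k, a)`. -/
structure Upd where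
  k : ℕ
  a : ℕ
  v : Fin a → D
  w : D

/-- The gauge `G(v⃗, w)` of an update. -/
def Upd.gauge (u : Upd) : ℕ := max (tupGauge u.v) u.w.gauge

/-- The frame entry corresponding to an update. -/
def Upd.entry (u : Upd) : Entry := ⟨u.k, u.a, (u.v, u.w)⟩

/-- `F * (f : v⃗ ↦ w)`: the frame `F` updated by the update. -/
noncomputable def Frame.apUpd (F : Frame) (u : Upd) : Frame := insert u.entry F

/-- `F * σ` for a sequence of updates `σ`. -/
noncomputable def Frame.apSeq (F : Frame) (σ : List Upd) : Frame :=
  σ.foldl Frame.apUpd F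

/-- `u` is an update based on `F`, `κ` and `d`: a generator `v⃗ ↦ w` with
`G(v⃗, w) ≤ κ` for a non-basic symbol `f`, obtained from an axiom
`f(t⃗) = u'` of `Ax` occurring in `d` and an assignment `ρ` by
`vᵢ = ρ(tᵢ)` and `w = ⟦u'⟧_{F,ρ}`. -/
def IsUpdate {Ax : Set Axm} {a b : Tm} (F : Frame) (κ : ℕ) (d : Deriv Ax a b)
    (u : Upd) : Prop :=
  u.w ≠ D.star ∧ u.gauge ≤ κ ∧
  ∃ A ∈ d.axiomsUsed, ∃ ρ : Assignment,
    u = ⟨A.k, A.a, fun i => (A.args i).evalA ρ, eval F ρ A.rhs⟩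

/-- `σ` is a sequence of updates based on `F`, `κ` and `d`: each update in
the sequence is an update based on the frame produced so far. -/
def IsUpdSeq {Ax : Set Axm} {a b : Tm} (κ : ℕ) (d : Deriv Ax a b) :
    Frame → List Upd → Prop
  | _, [] => True
  | F, u :: σ => IsUpdate F κ d u ∧ IsUpdSeq κ d (F.apUpd u) σ

/-- The gauge `G(σ)` of a sequence of updates. -/
def seqGauge (σ : List Upd) : ℕ := (σ.map Upd.gauge).foldr max 0

/-- The extent `E(σ)` of a sequence of updates (maximal arity used). -/
def seqExt (σ : List Upd) : ℕ := (σ.map Upd.a).foldr max 0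

/-! ## Instructions -/

/-- Instructions: `A[t→u]`, `A[t←u]` for axiom (instances) `t = u`, and
`S↑[t,s/x]`, `S↓[t,s/x]` for terms `t, s` and a variable `x`. -/
inductive Instr where
  | axF : Tm → Tm → Instr
  | axB : Tm → Tm → Instr
  | sUp : Tm → Tm → ℕ → Instr
  | sDown : Tm → Tm → ℕ → Instr

/-- The length of an instruction. -/
def Instr.lh : Instr → ℕ
  | .axF t u => t.lh + u.lh + 1
  | .axB t u => t.lh + u.lh + 1
  | .sUp t s _ => t.lh + s.lh + 1
  | .sDown t s _ => t.lh + s.lh + 1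

/-- The length of a sequence of instructions. -/
def instrsLh (τ : List Instr) : ℕ := (τ.map Instr.lh).sum

/-- An instruction is *for* the derivation `d` if its axiom instructions
carry (injective renamings of) axioms occurring in `d`. -/
def Instr.For {Ax : Set Axm} {a b : Tm} (d : Deriv Ax a b) : Instr → Prop
  | .axF t u => ∃ A ∈ d.axiomsUsed, ∃ σ : ℕ → Tm,
      Deriv.InjRenaming A σ ∧ t = A.lhs.msubst σ ∧ u = A.rhs.msubst σ
  | .axB t u => ∃ A ∈ d.axiomsUsed, ∃ σ : ℕ → Tm,
      Deriv.InjRenaming A σ ∧ t = A.lhs.msubst σ ∧ u = A.rhs.msubst σ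
  | .sUp _ _ _ => True
  | .sDown _ _ _ => True

/-- The instruction sequences `→Inst_𝒟` (first component) and `←Inst_𝒟`
(second component) extracted from a derivation. -/
def Deriv.insts {Ax : Set Axm} : {a b : Tm} → Deriv Ax a b → List Instr × List Instr
  | _, _, .ax A _ σ =>
      ([.axF (A.lhs.msubst σ) (A.rhs.msubst σ)],
       [.axB (A.lhs.msubst σ) (A.rhs.msubst σ)])
  | _, _, .refl _ => ([], [])
  | _, _, .symm d => (d.insts.2, d.insts.1)
  | _, _, .trans d₁ d₂ => (d₁.insts.1 ++ d₂.insts.1, d₂.insts.2 ++ d₁.insts.2)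
  | _, _, .compat _ _ d => d.insts
  | _, _, @Deriv.subst _ t u s x d =>
      (Instr.sUp t s x :: (d.insts.1 ++ [Instr.sDown u s x]),
       Instr.sUp u s x :: (d.insts.2 ++ [Instr.sDown t s x]))

/-- `Ψ(t ← u, ⟨F, ρ⟩)`: for `t` of the form `f(t⃗)`, the update `f : v⃗ ↦ w`
with `vᵢ = ρ(tᵢ)` and `w = ⟦u⟧_{F,ρ}`. -/
noncomputable def Psi (t u : Tm) (F : Frame) (ρ : Assignment) : Upd :=
  match t with
  | .app k a args => ⟨k, a, fun i => eval F ρ (args i), eval F ρ u⟩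
  | _ => ⟨0, 0, Fin.elim0, eval F ρ u⟩

/-- One step of the state transformer `Φ` (the frame `F` is the fixed base
frame; the state consists of the update sequence so far and the current
assignment). -/
noncomputable def PhiStep (F : Frame) (st : List Upd × Assignment) :
    Instr → List Upd × Assignment
  | .axF _ _ => st
  | .axB t u => (st.1 ++ [Psi t u (F.apSeq st.1) st.2], st.2)
  | .sUp _ s x => (st.1, Finsupp.update st.2 x (eval (F.apSeq st.1) st.2 s))
  | .sDown _ _ x => (st.1, st.2.erase x)

/-- The state transformer `Φ(τ, ⟨F, σ, ρ⟩) = ⟨F, σ', ρ'⟩`, processing the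
instruction sequence `τ` from left to right. -/
noncomputable def Phi (F : Frame) (τ : List Instr) (st : List Upd × Assignment) :
    List Upd × Assignment :=
  τ.foldl (PhiStep F) st

/-! ## Sub-derivations -/

/-- `SubDeriv e d`: `e` is a sub-derivation of `d`. -/
inductive SubDeriv {Ax : Set Axm} :
    {a b c d : Tm} → Deriv Ax a b → Deriv Ax c d → Prop where
  | refl {a b : Tm} (d : Deriv Ax a b) : SubDeriv d d
  | symm {a b t u : Tm} {e : Deriv Ax a b} {d : Deriv Ax u t} :
      SubDeriv e d → SubDeriv e (Deriv.symm d)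
  | transL {a b t s u : Tm} {e : Deriv Ax a b} {d₁ : Deriv Ax t s} {d₂ : Deriv Ax s u} :
      SubDeriv e d₁ → SubDeriv e (Deriv.trans d₁ d₂)
  | transR {a b t s u : Tm} {e : Deriv Ax a b} {d₁ : Deriv Ax t s} {d₂ : Deriv Ax s u} :
      SubDeriv e d₂ → SubDeriv e (Deriv.trans d₁ d₂)
  | compat {a b t u : Tm} (s : Tm) (x : ℕ) {e : Deriv Ax a b} {d : Deriv Ax t u} :
      SubDeriv e d → SubDeriv e (Deriv.compat s x d)
  | subst {a b t u : Tm} (s : Tm) (x : ℕ) {e : Deriv Ax a b} {d : Deriv Ax t u} :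
      SubDeriv e d → SubDeriv e (Deriv.subst s x d)



/-! ### Auxiliary lemmas for the proof of `vnf_exists` -/

namespace Tm

theorem lh_pos (t : Tm) : 0 < t.lh := by
  cases t <;> simp [Tm.lh]

theorem subst_eq_msubst (t : Tm) (x : ℕ) (s : Tm) :
    t.subst x s = t.msubst (fun y => if y = x then s else .var y) := by
  induction t with
  | var y => simp [Tm.subst, Tm.msubst]
  | eps => simp [Tm.subst, Tm.msubst]
  | s0 t ih => simp [Tm.subst, Tm.msubst, ih]
  | s1 t ih => simp [Tm.subst, Tm.msubst, ih]
  | app k a args ih => simp [Tm.subst, Tm.msubst]; funext i; exact ih i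

theorem msubst_congr {σ τ : ℕ → Tm} (t : Tm) (h : ∀ x ∈ t.vars, σ x = τ x) :
    t.msubst σ = t.msubst τ := by
  induction t with
  | var y => exact h y (by simp [Tm.vars])
  | eps => rfl
  | s0 t ih => simp only [Tm.msubst]; rw [ih h]
  | s1 t ih => simp only [Tm.msubst]; rw [ih h]
  | app k a args ih =>
      simp only [Tm.msubst]
      congr 1
      funext i
      exact ih i fun x hx => h x (by simp [Tm.vars]; exact ⟨i, hx⟩)

theorem msubst_msubst (t : Tm) (σ τ : ℕ → Tm) :
    (t.msubst σ).msubst τ = t.msubst (fun x => (σ x).msubst τ) := by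
  induction t with
  | var y => rfl
  | eps => rfl
  | s0 t ih => simp only [Tm.msubst]; rw [ih]
  | s1 t ih => simp only [Tm.msubst]; rw [ih]
  | app k a args ih =>
      simp only [Tm.msubst]
      congr 1
      funext i
      exact ih i

theorem vars_msubst (t : Tm) (σ : ℕ → Tm) :
    (t.msubst σ).vars = t.vars.biUnion fun x => (σ x).vars := by
  induction t with
  | var y => simp [Tm.msubst, Tm.vars]
  | eps => simp [Tm.msubst, Tm.vars]
  | s0 t ih => simpa [Tm.msubst, Tm.vars] using ih
  | s1 t ih => simpa [Tm.msubst, Tm.vars] using ih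
  | app k a args ih =>
      simp only [Tm.msubst, Tm.vars]
      ext x
      simp only [Finset.mem_biUnion, Finset.mem_univ, true_and]
      constructor
      · rintro ⟨i, hx⟩
        rw [ih i] at hx
        simp only [Finset.mem_biUnion] at hx
        obtain ⟨y, hy, hx⟩ := hx
        exact ⟨y, ⟨i, hy⟩, hx⟩
      · rintro ⟨y, ⟨i, hy⟩, hx⟩
        refine ⟨i, ?_⟩
        rw [ih i]
        simp only [Finset.mem_biUnion]
        exact ⟨y, hy, hx⟩

theorem msubst_var (t : Tm) : t.msubst Tm.var = t := by
  induction t with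
  | var y => rfl
  | eps => rfl
  | s0 t ih => simp only [Tm.msubst]; rw [ih]
  | s1 t ih => simp only [Tm.msubst]; rw [ih]
  | app k a args ih =>
      simp only [Tm.msubst]
      congr 1
      funext i
      exact ih i

theorem lh_msubst_le {σ τ : ℕ → Tm} (t : Tm) (h : ∀ x ∈ t.vars, (σ x).lh ≤ (τ x).lh) :
    (t.msubst σ).lh ≤ (t.msubst τ).lh := by
  induction t with
  | var y => exact h y (by simp [Tm.vars])
  | eps => simp [Tm.msubst]
  | s0 t ih => simpa [Tm.msubst, Tm.lh] using ih h
  | s1 t ih => simpa [Tm.msubst, Tm.lh] using ih h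
  | app k a args ih =>
      simp only [Tm.msubst, Tm.lh, add_le_add_iff_right]
      apply Finset.sum_le_sum
      intro i _
      exact ih i fun x hx => h x (by simp [Tm.vars]; exact ⟨i, hx⟩)

theorem lh_le_lh_msubst (t : Tm) (σ : ℕ → Tm) : t.lh ≤ (t.msubst σ).lh := by
  conv_lhs => rw [← msubst_var t]
  exact lh_msubst_le t fun x _ => (σ x).lh_pos

theorem lh_msubst_eq {σ : ℕ → Tm} (t : Tm) (h : ∀ x ∈ t.vars, (σ x).lh = 1) :
    (t.msubst σ).lh = t.lh := by
  refine le_antisymm ?_ (lh_le_lh_msubst t σ)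
  conv_rhs => rw [← msubst_var t]
  exact lh_msubst_le t fun x hx => by simp [Tm.lh, h x hx]

theorem card_vars_le_lh (t : Tm) : t.vars.card ≤ t.lh := by
  induction t with
  | var y => simp [Tm.vars, Tm.lh]
  | eps => simp [Tm.vars, Tm.lh]
  | s0 t ih => simp only [Tm.vars, Tm.lh]; omega
  | s1 t ih => simp only [Tm.vars, Tm.lh]; omega
  | app k a args ih =>
      simp only [Tm.vars, Tm.lh]
      calc (Finset.univ.biUnion fun i : Fin a => (args i).vars).card
          ≤ Finset.univ.sum (fun i : Fin a => (args i).vars.card) :=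
            Finset.card_biUnion_le
        _ ≤ Finset.univ.sum (fun i : Fin a => (args i).lh) :=
            Finset.sum_le_sum fun i _ => ih i
        _ ≤ _ := Nat.le_succ _

theorem subst_of_not_mem {t : Tm} {x : ℕ} {s : Tm} (h : x ∉ t.vars) : t.subst x s = t := by
  rw [subst_eq_msubst]
  rw [msubst_congr t (τ := Tm.var) (fun y hy => by
    have : y ≠ x := fun e => h (e ▸ hy)
    simp [this])]
  exact msubst_var t

theorem subst_self (t : Tm) (x : ℕ) : t.subst x (.var x) = t := by
  rw [subst_eq_msubst]
  rw [msubst_congr t (τ := Tm.var) (fun y hy => by by_cases h : y = x <;> simp [h])]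
  exact msubst_var t

theorem lh_apply_le {t : Tm} {σ : ℕ → Tm} {x : ℕ} (h : x ∈ t.vars) :
    (σ x).lh ≤ (t.msubst σ).lh := by
  induction t with
  | var y => simp [Tm.vars] at h; subst h; simp [Tm.msubst]
  | eps => simp [Tm.vars] at h
  | s0 t ih => simp [Tm.vars] at h; simpa [Tm.msubst, Tm.lh] using (ih h).trans (Nat.le_succ _)
  | s1 t ih => simp [Tm.vars] at h; simpa [Tm.msubst, Tm.lh] using (ih h).trans (Nat.le_succ _)
  | app k a args ih =>
      simp only [Tm.vars, Finset.mem_biUnion, Finset.mem_univ, true_and] at h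
      obtain ⟨i, hi⟩ := h
      refine (ih i hi).trans ?_
      simp only [Tm.msubst, Tm.lh]
      calc ((args i).msubst σ).lh ≤ Finset.univ.sum (fun j : Fin a => ((args j).msubst σ).lh) :=
            Finset.single_le_sum (f := fun j : Fin a => ((args j).msubst σ).lh) (fun j _ => Nat.zero_le _) (Finset.mem_univ i)
        _ ≤ _ := Nat.le_succ _

theorem vars_apply_subset {t : Tm} {σ : ℕ → Tm} {x : ℕ} (h : x ∈ t.vars) :
    (σ x).vars ⊆ (t.msubst σ).vars := by
  rw [vars_msubst]
  exact fun v hv => Finset.mem_biUnion.2 ⟨x, h, hv⟩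

end Tm

theorem GVar.vars_toTm (g : GVar) : g.toTm.vars = g.vars := by
  cases g <;> simp [GVar.toTm, GVar.vars, Tm.vars]

theorem Axm.lhs_vars (A : Axm) : A.lhs.vars = A.lhsVars := by
  simp only [Axm.lhs, Tm.vars, Axm.lhsVars]
  congr 1
  funext i
  exact GVar.vars_toTm _

theorem Axm.vars_eq (A : Axm) : A.vars = A.lhs.vars ∪ A.rhs.vars := by
  rw [Axm.lhs_vars]; rfl

namespace Deriv

variable {Ax : Set Axm}

/-- Cast a derivation along equalities of its endpoint terms. -/
def dcast {t u t' u' : Tm} (h1 : t = t') (h2 : u = u') (d : Deriv Ax t u) :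
    Deriv Ax t' u' := h1 ▸ h2 ▸ d

@[simp] theorem lh_dcast {t u t' u' : Tm} (h1 : t = t') (h2 : u = u') (d : Deriv Ax t u) :
    (d.dcast h1 h2).lh = d.lh := by subst h1; subst h2; rfl

@[simp] theorem varsOf_dcast {t u t' u' : Tm} (h1 : t = t') (h2 : u = u') (d : Deriv Ax t u) :
    (d.dcast h1 h2).varsOf = d.varsOf := by subst h1; subst h2; rfl

@[simp] theorem bvars_dcast {t u t' u' : Tm} (h1 : t = t') (h2 : u = u') (d : Deriv Ax t u) :
    (d.dcast h1 h2).bvars = d.bvars := by subst h1; subst h2; rfl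

@[simp] theorem VNFax_dcast {t u t' u' : Tm} (h1 : t = t') (h2 : u = u') (d : Deriv Ax t u) :
    (d.dcast h1 h2).VNFax ↔ d.VNFax := by subst h1; subst h2; rfl

/-- The endpoints of a derivation have their variables among the
variables of the derivation. -/
theorem vars_concl_subset : {a b : Tm} → (d : Deriv Ax a b) →
    a.vars ∪ b.vars ⊆ d.varsOf
  | _, _, .ax A hA σ => by simp [Deriv.varsOf]
  | _, _, .refl t => by simp [Deriv.varsOf]
  | _, _, .symm d => by
      simpa [Deriv.varsOf, Finset.union_comm] using vars_concl_subset d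
  | _, _, .trans d₁ d₂ => by
      simp only [Deriv.varsOf]
      exact Finset.union_subset
        ((Finset.subset_union_left.trans (vars_concl_subset d₁)).trans Finset.subset_union_left)
        ((Finset.subset_union_right.trans (vars_concl_subset d₂)).trans Finset.subset_union_right)
  | _, _, @Deriv.compat _ t u s x d => by
      simp only [Deriv.varsOf]
      have h := vars_concl_subset d
      have hs : ∀ w : Tm, (s.subst x w).vars ⊆ s.vars ∪ w.vars := by
        intro w
        rw [Tm.subst_eq_msubst, Tm.vars_msubst]
        intro v hv
        simp only [Finset.mem_biUnion] at hv
        obtain ⟨y, hy, hv⟩ := hv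
        by_cases hxy : y = x
        · simp [hxy] at hv; exact Finset.mem_union_right _ hv
        · simp [hxy, Tm.vars] at hv; subst hv; exact Finset.mem_union_left _ hy
      refine Finset.union_subset ?_ ?_
      · intro v hv
        rcases Finset.mem_union.1 (hs t hv) with h' | h'
        · exact Finset.mem_union_left _ (Finset.mem_union_right _ h')
        · exact Finset.mem_union_left _ (Finset.mem_union_left _
            (h (Finset.mem_union_left _ h')))
      · intro v hv
        rcases Finset.mem_union.1 (hs u hv) with h' | h'
        · exact Finset.mem_union_left _ (Finset.mem_union_right _ h')
        · exact Finset.mem_union_left _ (Finset.mem_union_left _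
            (h (Finset.mem_union_right _ h')))
  | _, _, @Deriv.subst _ t u s x d => by
      simp only [Deriv.varsOf]
      have h := vars_concl_subset d
      have hs : ∀ w : Tm, w.vars ⊆ d.varsOf → (w.subst x s).vars ⊆ d.varsOf ∪ s.vars ∪ {x} := by
        intro w hw
        rw [Tm.subst_eq_msubst, Tm.vars_msubst]
        intro v hv
        simp only [Finset.mem_biUnion] at hv
        obtain ⟨y, hy, hv⟩ := hv
        by_cases hxy : y = x
        · simp [hxy] at hv
          exact Finset.mem_union_left _ (Finset.mem_union_right _ hv)
        · simp [hxy, Tm.vars] at hv; subst hv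
          exact Finset.mem_union_left _ (Finset.mem_union_left _ (hw hy))
      exact Finset.union_subset
        (hs t fun v hv => h (Finset.mem_union_left _ hv))
        (hs u fun v hv => h (Finset.mem_union_right _ hv))

/-- The length of a derivation dominates the lengths of its endpoints. -/
theorem concl_lh_lt : {a b : Tm} → (d : Deriv Ax a b) → a.lh + b.lh < d.lh
  | _, _, .ax A hA σ => by simp [Deriv.lh]
  | _, _, .refl t => by simp [Deriv.lh]
  | _, _, .symm d => by simp [Deriv.lh]; omega
  | _, _, .trans d₁ d₂ => by simp [Deriv.lh]; omega
  | _, _, @Deriv.compat _ t u s x d => by simp [Deriv.lh]; omega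
  | _, _, @Deriv.subst _ t u s x d => by simp [Deriv.lh]; omega

/-- The number of variables of a derivation is at most its length. -/
theorem card_varsOf_le_lh : {a b : Tm} → (d : Deriv Ax a b) → d.varsOf.card ≤ d.lh
  | _, _, .ax A hA σ => by
      simp only [Deriv.varsOf, Deriv.lh]
      have := Finset.card_union_le (A.lhs.msubst σ).vars (A.rhs.msubst σ).vars
      have h1 := Tm.card_vars_le_lh (A.lhs.msubst σ)
      have h2 := Tm.card_vars_le_lh (A.rhs.msubst σ)
      omega
  | _, _, .refl t => by
      simp only [Deriv.varsOf, Deriv.lh]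
      have := Tm.card_vars_le_lh t
      omega
  | _, _, .symm d => by
      simp only [Deriv.varsOf, Deriv.lh]
      have := card_varsOf_le_lh d
      omega
  | _, _, .trans d₁ d₂ => by
      simp only [Deriv.varsOf, Deriv.lh]
      have := Finset.card_union_le d₁.varsOf d₂.varsOf
      have h1 := card_varsOf_le_lh d₁
      have h2 := card_varsOf_le_lh d₂
      omega
  | _, _, @Deriv.compat _ t u s x d => by
      simp only [Deriv.varsOf, Deriv.lh]
      have := Finset.card_union_le (d.varsOf ∪ s.vars) ({x} : Finset ℕ)
      have h2 := Finset.card_union_le d.varsOf s.vars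
      have h3 := card_varsOf_le_lh d
      have h4 := Tm.card_vars_le_lh s
      simp only [Finset.card_singleton] at this
      omega
  | _, _, @Deriv.subst _ t u s x d => by
      simp only [Deriv.varsOf, Deriv.lh]
      have := Finset.card_union_le (d.varsOf ∪ s.vars) ({x} : Finset ℕ)
      have h2 := Finset.card_union_le d.varsOf s.vars
      have h3 := card_varsOf_le_lh d
      have h4 := Tm.card_vars_le_lh s
      simp only [Finset.card_singleton] at this
      omega

end Deriv

namespace Tm

theorem lh_rename (π : ℕ → ℕ) (t : Tm) : (t.msubst (Tm.var ∘ π)).lh = t.lh :=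
  lh_msubst_eq t fun x _ => rfl

theorem vars_rename (π : ℕ → ℕ) (t : Tm) :
    (t.msubst (Tm.var ∘ π)).vars = t.vars.image π := by
  rw [vars_msubst]
  ext v
  simp [Tm.vars, Function.comp, eq_comm]

theorem rename_subst {π : ℕ → ℕ} (hπ : Function.Injective π) (t s : Tm) (x : ℕ) :
    (t.subst x s).msubst (Tm.var ∘ π)
      = (t.msubst (Tm.var ∘ π)).subst (π x) (s.msubst (Tm.var ∘ π)) := by
  rw [subst_eq_msubst, subst_eq_msubst, msubst_msubst, msubst_msubst]
  refine msubst_congr t fun z _ => ?_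
  by_cases h : z = x
  · subst h; simp [Tm.msubst]
  · have : π z ≠ π x := fun e => h (hπ e)
    simp [h, this, Tm.msubst, Function.comp]

end Tm

namespace Deriv

variable {Ax : Set Axm}

theorem InjRenaming.rename {A : Axm} {σ : ℕ → Tm} {π : ℕ → ℕ}
    (hπ : Function.Injective π) (h : InjRenaming A σ) :
    InjRenaming A (fun x => (σ x).msubst (Tm.var ∘ π)) := by
  constructor
  · intro x hx
    obtain ⟨y, hy⟩ := h.1 x hx
    exact ⟨π y, by simp [hy, Tm.msubst]⟩
  · intro x₁ h₁ x₂ h₂ he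
    obtain ⟨y₁, hy₁⟩ := h.1 x₁ h₁
    obtain ⟨y₂, hy₂⟩ := h.1 x₂ h₂
    simp only [hy₁, hy₂, Tm.msubst, Function.comp] at he
    have : y₁ = y₂ := hπ (by injection he)
    exact h.2 h₁ h₂ (by rw [hy₁, hy₂, this])

/-- Renaming of a derivation along an injective variable renaming, bundled
with its properties. -/
noncomputable def renameB (π : ℕ → ℕ) (hπ : Function.Injective π) :
    {a b : Tm} → (d : Deriv Ax a b) →
    { d' : Deriv Ax (a.msubst (Tm.var ∘ π)) (b.msubst (Tm.var ∘ π)) //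
      d'.lh = d.lh ∧ d'.bvars = d.bvars.map π ∧ d'.varsOf = d.varsOf.image π ∧
      (d.VNFax → d'.VNFax) }
  | _, _, .ax A hA σ =>
      ⟨Deriv.dcast (Tm.msubst_msubst _ _ _).symm (Tm.msubst_msubst _ _ _).symm
        (.ax A hA (fun x => (σ x).msubst (Tm.var ∘ π))), by
          have e1 : A.lhs.msubst (fun x => (σ x).msubst (Tm.var ∘ π))
              = (A.lhs.msubst σ).msubst (Tm.var ∘ π) := (Tm.msubst_msubst _ _ _).symm
          have e2 : A.rhs.msubst (fun x => (σ x).msubst (Tm.var ∘ π))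
              = (A.rhs.msubst σ).msubst (Tm.var ∘ π) := (Tm.msubst_msubst _ _ _).symm
          refine ⟨?_, ?_, ?_, ?_⟩
          · simp [Deriv.lh, e1, e2, Tm.lh_rename]
          · simp [Deriv.bvars]
          · simp [Deriv.varsOf, e1, e2, Tm.vars_rename, Finset.image_union]
          · intro hax
            simp only [VNFax_dcast, Deriv.VNFax]
            exact InjRenaming.rename hπ hax⟩
  | _, _, .refl t => ⟨.refl _, by simp [Deriv.lh, Deriv.bvars, Deriv.varsOf,
      Tm.lh_rename, Tm.vars_rename, Deriv.VNFax]⟩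
  | _, _, .symm d =>
      let r := renameB π hπ d
      ⟨.symm r.1, by
        obtain ⟨h1, h2, h3, h4⟩ := r.2
        exact ⟨by simp [Deriv.lh, h1, Tm.lh_rename], by simpa [Deriv.bvars] using h2,
          by simpa [Deriv.varsOf] using h3, fun h => h4 h⟩⟩
  | _, _, .trans d₁ d₂ =>
      let r₁ := renameB π hπ d₁
      let r₂ := renameB π hπ d₂
      ⟨.trans r₁.1 r₂.1, by
        obtain ⟨h1, h2, h3, h4⟩ := r₁.2
        obtain ⟨g1, g2, g3, g4⟩ := r₂.2
        refine ⟨by simp [Deriv.lh, h1, g1, Tm.lh_rename], ?_, ?_, ?_⟩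
        · simp [Deriv.bvars, h2, g2]
        · simp [Deriv.varsOf, h3, g3, Finset.image_union]
        · exact fun h => ⟨h4 h.1, g4 h.2⟩⟩
  | _, _, @Deriv.compat _ t u s x d =>
      let r := renameB π hπ d
      ⟨Deriv.dcast (Tm.rename_subst hπ s t x).symm (Tm.rename_subst hπ s u x).symm
        (.compat (s.msubst (Tm.var ∘ π)) (π x) r.1), by
        obtain ⟨h1, h2, h3, h4⟩ := r.2
        refine ⟨?_, ?_, ?_, ?_⟩
        · simp only [lh_dcast, Deriv.lh, h1, ← Tm.rename_subst hπ s t x,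
            ← Tm.rename_subst hπ s u x, Tm.lh_rename]
        · simpa [Deriv.bvars] using h2
        · simp [Deriv.varsOf, h3, Tm.vars_rename, Finset.image_union]
        · exact fun h => (VNFax_dcast _ _ _).2 (h4 h)⟩
  | _, _, @Deriv.subst _ t u s x d =>
      let r := renameB π hπ d
      ⟨Deriv.dcast (Tm.rename_subst hπ t s x).symm (Tm.rename_subst hπ u s x).symm
        (.subst (s.msubst (Tm.var ∘ π)) (π x) r.1), by
        obtain ⟨h1, h2, h3, h4⟩ := r.2
        refine ⟨?_, ?_, ?_, ?_⟩
        · simp only [lh_dcast, Deriv.lh, h1, ← Tm.rename_subst hπ t s x,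
            ← Tm.rename_subst hπ u s x, Tm.lh_rename]
        · simp [Deriv.bvars, h2]
        · simp [Deriv.varsOf, h3, Tm.vars_rename, Finset.image_union]
        · exact fun h => (VNFax_dcast _ _ _).2 (h4 h)⟩

end Deriv

namespace Deriv

variable {Ax : Set Axm}

/-- The fresh variable assigned to the axiom variable `x` (base `N`). -/
noncomputable def axFrv (A : Axm) (N x : ℕ) : ℕ := N + A.vars.toList.idxOf x

/-- The partial instantiation of the variables of an axiom: variables in `p`
are sent to their `σ`-value, the others to their fresh renaming. -/
noncomputable def axRho (A : Axm) (σ : ℕ → Tm) (N : ℕ) (p : List ℕ) : ℕ → Tm :=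
  fun x => if x ∈ p then σ x else Tm.var (axFrv A N x)

theorem axStep {A : Axm} {σ : ℕ → Tm} {N : ℕ}
    (hσ : ∀ z ∈ A.vars, ∀ v ∈ (σ z).vars, v < N)
    {w : Tm} (hw : w.vars ⊆ A.vars) {x : ℕ} {p : List ℕ} (hx : x ∉ p) (hxA : x ∈ A.vars) :
    (w.msubst (axRho A σ N p)).subst (axFrv A N x) (σ x)
      = w.msubst (axRho A σ N (x :: p)) := by
  rw [Tm.subst_eq_msubst, Tm.msubst_msubst]
  refine Tm.msubst_congr w fun z hz => ?_
  have hzA : z ∈ A.vars := hw hz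
  by_cases hzp : z ∈ p
  · have h1 : axRho A σ N p z = σ z := if_pos hzp
    have h2 : axRho A σ N (x :: p) z = σ z := if_pos (List.mem_cons_of_mem _ hzp)
    rw [h1, h2, ← Tm.subst_eq_msubst]
    exact Tm.subst_of_not_mem fun hmem =>
      absurd (hσ z hzA _ hmem) (by simp [axFrv])
  · by_cases hzx : z = x
    · subst hzx
      have h1 : axRho A σ N p z = Tm.var (axFrv A N z) := if_neg hzp
      have h2 : axRho A σ N (z :: p) z = σ z := if_pos List.mem_cons_self
      rw [h1, h2]
      simp [Tm.msubst]
    · have h1 : axRho A σ N p z = Tm.var (axFrv A N z) := if_neg hzp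
      have h2 : axRho A σ N (x :: p) z = Tm.var (axFrv A N z) := if_neg (by
        simp only [List.mem_cons]; push_neg; exact ⟨hzx, hzp⟩)
      rw [h1, h2]
      have : axFrv A N z ≠ axFrv A N x := by
        simp only [axFrv]
        intro h
        exact hzx ((List.idxOf_inj (Finset.mem_toList.2 hzA)).1 (Nat.add_left_cancel h))
      simp [Tm.msubst, this]

theorem lh_axRho_le (A : Axm) (σ : ℕ → Tm) (N : ℕ) (p : List ℕ) (w : Tm) :
    (w.msubst (axRho A σ N p)).lh ≤ (w.msubst σ).lh := by
  refine Tm.lh_msubst_le w fun z _ => ?_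
  by_cases h : z ∈ p
  · simp [axRho, h]
  · simp [axRho, h, Tm.lh]
    exact (σ z).lh_pos

/-- The core of the replacement of an axiom-rule application by a block
consisting of an injective renaming followed by substitutions. -/
noncomputable def axCore (A : Axm) (hA : A ∈ Ax) (σ : ℕ → Tm) (N : ℕ)
    (hσ : ∀ z ∈ A.vars, ∀ v ∈ (σ z).vars, v < N) :
    (p : List ℕ) → p.Nodup → (∀ x ∈ p, x ∈ A.vars) →
    { d : Deriv Ax (A.lhs.msubst (axRho A σ N p)) (A.rhs.msubst (axRho A σ N p)) //
      d.VNFax ∧ d.bvars = p.map (axFrv A N) ∧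
      (∀ v ∈ d.varsOf, v ∈ (A.lhs.msubst σ).vars ∪ (A.rhs.msubst σ).vars ∨
        ∃ x ∈ A.vars, v = axFrv A N x) ∧
      d.lh ≤ ((A.lhs.msubst σ).lh + (A.rhs.msubst σ).lh + 1) * (1 + 5 * p.length) }
  | [], _, _ =>
      ⟨.ax A hA (axRho A σ N []), by
        refine ⟨?_, rfl, ?_, ?_⟩
        · -- VNFax: injective renaming
          refine ⟨fun x _ => ⟨axFrv A N x, by simp [axRho]⟩, ?_⟩
          intro x₁ h₁ x₂ h₂ he
          simp only [axRho, List.not_mem_nil, if_neg (fun h => h), if_false] at he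
          have he' : axFrv A N x₁ = axFrv A N x₂ := by
            simpa [axRho, Tm.var.injEq] using he
          simp only [axFrv] at he'
          exact (List.idxOf_inj (Finset.mem_toList.2 h₁)).1 (Nat.add_left_cancel he')
        · intro v hv
          right
          simp only [Deriv.varsOf, Finset.mem_union, Tm.vars_msubst,
            Finset.mem_biUnion] at hv
          rcases hv with ⟨z, hz, hv⟩ | ⟨z, hz, hv⟩
          · have hzA : z ∈ A.vars := by
              rw [Axm.vars_eq]; exact Finset.mem_union_left _ hz
            exact ⟨z, hzA, by simpa [axRho, Tm.vars] using hv⟩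
          · have hzA : z ∈ A.vars := by
              rw [Axm.vars_eq]; exact Finset.mem_union_right _ hz
            exact ⟨z, hzA, by simpa [axRho, Tm.vars] using hv⟩
        · simp only [Deriv.lh, List.length_nil, Nat.mul_one]
          have h1 := lh_axRho_le A σ N [] A.lhs
          have h2 := lh_axRho_le A σ N [] A.rhs
          omega⟩
  | x :: p, hnd, hmem => by
      have hx : x ∉ p := (List.nodup_cons.1 hnd).1
      have hxA : x ∈ A.vars := hmem x List.mem_cons_self
      have hwl : A.lhs.vars ⊆ A.vars := Axm.vars_eq A ▸ Finset.subset_union_left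
      have hwr : A.rhs.vars ⊆ A.vars := Axm.vars_eq A ▸ Finset.subset_union_right
      obtain ⟨d, hvnf, hbv, hvo, hlh⟩ :=
        axCore A hA σ N hσ p (List.nodup_cons.1 hnd).2 fun z hz => hmem z (List.mem_cons_of_mem _ hz)
      refine ⟨Deriv.dcast (axStep hσ hwl hx hxA) (axStep hσ hwr hx hxA)
        (.subst (σ x) (axFrv A N x) d), ?_, ?_, ?_, ?_⟩
      · exact (VNFax_dcast _ _ _).2 hvnf
      · simp [Deriv.bvars, hbv]
      · intro v hv
        simp only [varsOf_dcast, Deriv.varsOf, Finset.mem_union] at hv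
        rcases hv with (hv | hv) | hv
        · exact hvo v hv
        · left
          have hx' : x ∈ A.lhs.vars ∪ A.rhs.vars := Axm.vars_eq A ▸ hxA
          rcases Finset.mem_union.1 hx' with h | h
          · exact Finset.mem_union_left _ (Tm.vars_apply_subset h hv)
          · exact Finset.mem_union_right _ (Tm.vars_apply_subset h hv)
        · right
          exact ⟨x, hxA, by simpa using hv⟩
      · simp only [lh_dcast, Deriv.lh]
        set M1 := (A.lhs.msubst σ).lh with hM1
        set M2 := (A.rhs.msubst σ).lh with hM2
        have e1 : ((A.lhs.msubst (axRho A σ N p)).subst (axFrv A N x) (σ x)).lh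
            ≤ M1 := by rw [axStep hσ hwl hx hxA]; exact lh_axRho_le A σ N _ _
        have e2 : ((A.rhs.msubst (axRho A σ N p)).subst (axFrv A N x) (σ x)).lh
            ≤ M2 := by rw [axStep hσ hwr hx hxA]; exact lh_axRho_le A σ N _ _
        have e3 : (A.lhs.msubst (axRho A σ N p)).lh ≤ M1 := lh_axRho_le A σ N _ _
        have e4 : (A.rhs.msubst (axRho A σ N p)).lh ≤ M2 := lh_axRho_le A σ N _ _
        have e5 : (σ x).lh ≤ M1 + M2 := by
          have hx' : x ∈ A.lhs.vars ∪ A.rhs.vars := Axm.vars_eq A ▸ hxA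
          rcases Finset.mem_union.1 hx' with h | h
          · exact (Tm.lh_apply_le h).trans (Nat.le_add_right _ _)
          · exact (Tm.lh_apply_le h).trans (Nat.le_add_left _ _)
        simp only [List.length_cons]
        nlinarith [hlh]

/-- The replacement of an axiom-rule application by a Variable Normal Form
block: an injective renaming of the axiom followed by substitutions. -/
noncomputable def axBlock (A : Axm) (hA : A ∈ Ax) (σ : ℕ → Tm) (N : ℕ)
    (hN : ∀ v ∈ (A.lhs.msubst σ).vars ∪ (A.rhs.msubst σ).vars, v < N) :
    { d : Deriv Ax (A.lhs.msubst σ) (A.rhs.msubst σ) //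
      d.VNFax ∧ d.bvars.Nodup ∧ (∀ x ∈ d.bvars, N ≤ x ∧ x < N + A.vars.card) ∧
      (∀ v ∈ d.varsOf, v ∈ (A.lhs.msubst σ).vars ∪ (A.rhs.msubst σ).vars ∨ v ∈ d.bvars) ∧
      d.lh ≤ 7 * ((A.lhs.msubst σ).lh + (A.rhs.msubst σ).lh + 1) ^ 2 } := by
  have hσ : ∀ z ∈ A.vars, ∀ v ∈ (σ z).vars, v < N := by
    intro z hz v hv
    have hz' : z ∈ A.lhs.vars ∪ A.rhs.vars := Axm.vars_eq A ▸ hz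
    rcases Finset.mem_union.1 hz' with h | h
    · exact hN v (Finset.mem_union_left _ (Tm.vars_apply_subset h hv))
    · exact hN v (Finset.mem_union_right _ (Tm.vars_apply_subset h hv))
  obtain ⟨d, hvnf, hbv, hvo, hlh⟩ := axCore A hA σ N hσ A.vars.toList
    (Finset.nodup_toList _) (fun z hz => Finset.mem_toList.1 hz)
  have hfin : ∀ w : Tm, w.vars ⊆ A.vars →
      w.msubst (axRho A σ N A.vars.toList) = w.msubst σ := by
    intro w hw
    refine Tm.msubst_congr w fun z hz => ?_
    simp [axRho, Finset.mem_toList.2 (hw hz)]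
  have hwl : A.lhs.vars ⊆ A.vars := Axm.vars_eq A ▸ Finset.subset_union_left
  have hwr : A.rhs.vars ⊆ A.vars := Axm.vars_eq A ▸ Finset.subset_union_right
  refine ⟨Deriv.dcast (hfin A.lhs hwl) (hfin A.rhs hwr) d, ?_, ?_, ?_, ?_, ?_⟩
  · exact (VNFax_dcast _ _ _).2 hvnf
  · rw [bvars_dcast, hbv]
    refine List.Nodup.map_on ?_ (Finset.nodup_toList _)
    intro x hx y hy he
    simp only [axFrv] at he
    exact (List.idxOf_inj hx).1 (Nat.add_left_cancel he)
  · rw [bvars_dcast, hbv]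
    intro v hv
    simp only [List.mem_map] at hv
    obtain ⟨x, hx, rfl⟩ := hv
    have : A.vars.toList.idxOf x < A.vars.toList.length := List.idxOf_lt_length_iff.2 hx
    rw [Finset.length_toList] at this
    simp only [axFrv]
    omega
  · rw [varsOf_dcast, bvars_dcast, hbv]
    intro v hv
    rcases hvo v hv with h | ⟨x, hx, rfl⟩
    · exact Or.inl h
    · exact Or.inr (List.mem_map.2 ⟨x, Finset.mem_toList.2 hx, rfl⟩)
  · rw [lh_dcast]
    refine hlh.trans ?_
    set M1 := (A.lhs.msubst σ).lh with hM1
    set M2 := (A.rhs.msubst σ).lh with hM2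
    have hcard : A.vars.toList.length ≤ M1 + M2 := by
      rw [Finset.length_toList]
      have h1 : A.vars.card ≤ A.lhs.vars.card + A.rhs.vars.card := by
        rw [Axm.vars_eq]
        exact Finset.card_union_le _ _
      have h2 := Tm.card_vars_le_lh A.lhs
      have h3 := Tm.card_vars_le_lh A.rhs
      have h4 := Tm.lh_le_lh_msubst A.lhs σ
      have h5 := Tm.lh_le_lh_msubst A.rhs σ
      omega
    nlinarith [Tm.lh_pos (A.lhs.msubst σ), Tm.lh_pos (A.rhs.msubst σ)]

end Deriv

/-- Transposition of two variables. -/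
def swp (x y z : ℕ) : ℕ := if z = x then y else if z = y then x else z

theorem swp_injective (x y : ℕ) : Function.Injective (swp x y) := by
  intro a b h
  unfold swp at h
  split_ifs at h <;> omega

theorem swp_eq_self {x y z : ℕ} (hx : z ≠ x) (hy : z ≠ y) : swp x y z = z := by
  simp [swp, hx, hy]

theorem Tm.swap_subst {t : Tm} (s : Tm) {x y : ℕ} (hy : y ∉ t.vars) :
    (t.msubst (Tm.var ∘ swp x y)).subst y s = t.subst x s := by
  rw [Tm.subst_eq_msubst, Tm.subst_eq_msubst, Tm.msubst_msubst]
  refine Tm.msubst_congr t fun z hz => ?_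
  have hzy : z ≠ y := fun e => hy (e ▸ hz)
  by_cases hzx : z = x
  · subst hzx
    simp [swp, Tm.msubst, Function.comp]
  · simp only [Function.comp_apply, swp_eq_self hzx hzy, Tm.msubst, hzy, if_false]
    rw [if_neg hzx]

theorem lh_glue (a a' b b' c : ℕ) (h1 : a' ≤ 7 * a ^ 2) (h2 : b' ≤ 7 * b ^ 2)
    (hc : 1 ≤ c) : a' + b' + c ≤ 7 * (a + b + c) ^ 2 := by
  have hcc : c ≤ c ^ 2 := Nat.le_self_pow (by norm_num) c
  have h3 : 7 * (a + b + c) ^ 2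
      = 7 * a ^ 2 + 7 * b ^ 2 + 7 * c ^ 2 + 14 * (a * b) + 14 * (a * c) + 14 * (b * c) := by
    ring
  have n1 : 0 ≤ a * b := Nat.zero_le _
  have n2 : 0 ≤ a * c := Nat.zero_le _
  have n3 : 0 ≤ b * c := Nat.zero_le _
  linarith

theorem lh_glue1 (a a' c : ℕ) (h1 : a' ≤ 7 * a ^ 2) (hc : 1 ≤ c) :
    a' + c ≤ 7 * (a + c) ^ 2 := by
  have := lh_glue a a' 0 0 c h1 (by simp) hc
  simpa using this

namespace Deriv

variable {Ax : Set Axm}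

/-- The main recursive transformation: renames axiom applications to
injective renamings followed by substitutions, and renames all bound
variables apart, using fresh variables `≥ n`. -/
noncomputable def vnfAux : {a b : Tm} → (d : Deriv Ax a b) → (n : ℕ) →
    (∀ v ∈ d.varsOf, v < n) →
    Σ' (n' : ℕ) (d' : Deriv Ax a b),
      n ≤ n' ∧ d'.VNFax ∧ d'.bvars.Nodup ∧ (∀ x ∈ d'.bvars, n ≤ x ∧ x < n') ∧
      (∀ x ∈ d'.varsOf, x ∈ d.varsOf ∨ x ∈ d'.bvars) ∧ d'.lh ≤ 7 * d.lh ^ 2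
  | _, _, .ax A hA σ, n, hn => by
      obtain ⟨d', h1, h2, h3, h4, h5⟩ := axBlock A hA σ n (fun v hv => hn v hv)
      refine ⟨n + A.vars.card, d', Nat.le_add_right _ _, h1, h2, h3,
        fun x hx => h4 x hx, ?_⟩
      refine h5.trans ?_
      simp [Deriv.lh]
  | _, _, .refl t, n, hn =>
      ⟨n, .refl t, le_rfl, trivial, List.nodup_nil, by simp [Deriv.bvars],
        fun x hx => Or.inl hx, by
          have : 0 < Deriv.lh (Ax := Ax) (.refl t) := by simp [Deriv.lh]
          nlinarith⟩
  | _, _, .symm d0, n, hn => by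
      obtain ⟨n', d0', hle, hvnf, hnd, hrange, hvo, hlh⟩ := vnfAux d0 n hn
      refine ⟨n', .symm d0', hle, hvnf, hnd, hrange, fun x hx => hvo x hx, ?_⟩
      simp only [Deriv.lh]
      exact lh_glue1 _ _ _ hlh (by omega)
  | _, _, .trans d₁ d₂, n, hn => by
      have hn1 : ∀ v ∈ d₁.varsOf, v < n := fun v hv =>
        hn v (Finset.mem_union_left _ hv)
      obtain ⟨n₁, d₁', hle₁, hvnf₁, hnd₁, hrange₁, hvo₁, hlh₁⟩ := vnfAux d₁ n hn1
      have hn2 : ∀ v ∈ d₂.varsOf, v < n₁ := fun v hv =>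
        lt_of_lt_of_le (hn v (Finset.mem_union_right _ hv)) hle₁
      obtain ⟨n₂, d₂', hle₂, hvnf₂, hnd₂, hrange₂, hvo₂, hlh₂⟩ := vnfAux d₂ n₁ hn2
      refine ⟨n₂, .trans d₁' d₂', hle₁.trans hle₂, ⟨hvnf₁, hvnf₂⟩, ?_, ?_, ?_, ?_⟩
      · -- nodup of the appended bound variables
        rw [show (Deriv.trans d₁' d₂').bvars = d₁'.bvars ++ d₂'.bvars from rfl]
        refine List.Nodup.append hnd₁ hnd₂ ?_
        intro w h1 h2
        have := hrange₁ w h1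
        have := hrange₂ w h2
        omega
      · intro w hw
        rw [show (Deriv.trans d₁' d₂').bvars = d₁'.bvars ++ d₂'.bvars from rfl] at hw
        rcases List.mem_append.1 hw with h | h
        · have := hrange₁ w h; omega
        · have := hrange₂ w h; omega
      · intro w hw
        rcases Finset.mem_union.1 hw with h | h
        · rcases hvo₁ w h with h' | h'
          · exact Or.inl (Finset.mem_union_left _ h')
          · exact Or.inr (List.mem_append.2 (Or.inl h'))
        · rcases hvo₂ w h with h' | h'
          · exact Or.inl (Finset.mem_union_right _ h')
          · exact Or.inr (List.mem_append.2 (Or.inr h'))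
      · simp only [Deriv.lh]
        exact lh_glue _ _ _ _ _ hlh₁ hlh₂ (by omega)
  | _, _, .compat s x d0, n, hn => by
      have hn0 : ∀ v ∈ d0.varsOf, v < n := fun v hv =>
        hn v (Finset.mem_union_left _ (Finset.mem_union_left _ hv))
      obtain ⟨n', d0', hle, hvnf, hnd, hrange, hvo, hlh⟩ := vnfAux d0 n hn0
      refine ⟨n', .compat s x d0', hle, hvnf, hnd, hrange, ?_, ?_⟩
      · intro w hw
        rcases Finset.mem_union.1 hw with hw | hw
        · rcases Finset.mem_union.1 hw with hw | hw
          · rcases hvo w hw with h' | h'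
            · exact Or.inl (Finset.mem_union_left _ (Finset.mem_union_left _ h'))
            · exact Or.inr h'
          · exact Or.inl (Finset.mem_union_left _ (Finset.mem_union_right _ hw))
        · exact Or.inl (Finset.mem_union_right _ hw)
      · simp only [Deriv.lh]
        exact lh_glue _ _ _ _ _ hlh (by nlinarith) (by omega)
  | _, _, @Deriv.subst _ t0 u0 s x d0, n, hn => by
      have hn0 : ∀ v ∈ d0.varsOf, v < n := fun v hv =>
        hn v (Finset.mem_union_left _ (Finset.mem_union_left _ hv))
      obtain ⟨n₁, d0', hle, hvnf, hnd, hrange, hvo, hlh⟩ := vnfAux d0 n hn0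
      have hxn : x < n := hn x (Finset.mem_union_right _ (Finset.mem_singleton_self x))
      have hyt : n₁ ∉ t0.vars := fun h =>
        absurd (hn0 _ (d0.vars_concl_subset (Finset.mem_union_left _ h))) (by omega)
      have hyu : n₁ ∉ u0.vars := fun h =>
        absurd (hn0 _ (d0.vars_concl_subset (Finset.mem_union_right _ h))) (by omega)
      obtain ⟨r, hr1, hr2, hr3, hr4⟩ := renameB (swp x n₁) (swp_injective x n₁) d0'
      have hbfix : ∀ w ∈ d0'.bvars, swp x n₁ w = w := by
        intro w hw
        have := hrange w hw
        exact swp_eq_self (by omega) (by omega)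
      have hbv : r.bvars = d0'.bvars := by
        rw [hr2, List.map_congr_left hbfix, List.map_id']
      refine ⟨n₁ + 1,
        Deriv.dcast (Tm.swap_subst s hyt) (Tm.swap_subst s hyu) (.subst s n₁ r),
        by omega, ?_, ?_, ?_, ?_, ?_⟩
      · exact (VNFax_dcast _ _ _).2 (hr4 hvnf)
      · rw [bvars_dcast, show (Deriv.subst s n₁ r).bvars = n₁ :: r.bvars from rfl, hbv]
        refine List.nodup_cons.2 ⟨fun h => ?_, hnd⟩
        have := hrange _ h; omega
      · intro w hw
        rw [bvars_dcast, show (Deriv.subst s n₁ r).bvars = n₁ :: r.bvars from rfl,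
          hbv] at hw
        rcases List.mem_cons.1 hw with h | h
        · omega
        · have := hrange w h; omega
      · intro w hw
        rw [varsOf_dcast, show (Deriv.subst s n₁ r).varsOf
          = r.varsOf ∪ s.vars ∪ {n₁} from rfl] at hw
        have hbvd : (Deriv.dcast (Tm.swap_subst s hyt) (Tm.swap_subst s hyu)
            (Deriv.subst s n₁ r)).bvars = n₁ :: d0'.bvars := by
          rw [bvars_dcast, show (Deriv.subst s n₁ r).bvars = n₁ :: r.bvars from rfl, hbv]
        rw [hbvd]
        rcases Finset.mem_union.1 hw with hw | hw
        · rcases Finset.mem_union.1 hw with hw | hw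
          · rw [hr3] at hw
            obtain ⟨w0, hw0, rfl⟩ := Finset.mem_image.1 hw
            rcases hvo w0 hw0 with h' | h'
            · -- w0 is an original variable of d0
              have hw0n : w0 < n := hn0 w0 h'
              by_cases hwx : w0 = x
              · subst hwx
                have hsw : swp w0 n₁ w0 = n₁ := by simp [swp]
                rw [hsw]
                exact Or.inr List.mem_cons_self
              · rw [swp_eq_self hwx (by omega)]
                exact Or.inl (Finset.mem_union_left _ (Finset.mem_union_left _ h'))
            · rw [hbfix w0 h']
              exact Or.inr (List.mem_cons_of_mem _ h')
          · exact Or.inl (Finset.mem_union_left _ (Finset.mem_union_right _ hw))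
        · have := Finset.mem_singleton.1 hw
          subst this
          exact Or.inr List.mem_cons_self
      · rw [lh_dcast]
        have hlh' : (Deriv.subst s n₁ r).lh
            = r.lh + ((t0.subst x s).lh + (u0.subst x s).lh + 1)
              + (t0.lh + s.lh + 1 + u0.lh + s.lh + 1 + 2) := by
          show r.lh + (((t0.msubst (Tm.var ∘ swp x n₁)).subst n₁ s).lh
              + ((u0.msubst (Tm.var ∘ swp x n₁)).subst n₁ s).lh + 1)
            + ((t0.msubst (Tm.var ∘ swp x n₁)).lh + s.lh + 1
              + (u0.msubst (Tm.var ∘ swp x n₁)).lh + s.lh + 1 + 2) = _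
          rw [Tm.swap_subst s hyt, Tm.swap_subst s hyu, Tm.lh_rename, Tm.lh_rename]
        rw [hlh', hr1]
        have hlhd : (Deriv.subst s x d0).lh
            = d0.lh + ((t0.subst x s).lh + (u0.subst x s).lh + 1)
              + (t0.lh + s.lh + 1 + u0.lh + s.lh + 1 + 2) := rfl
        rw [hlhd]
        exact lh_glue _ _ _ _ _ hlh (by nlinarith) (by omega)

end Deriv

namespace Deriv

variable {Ax : Set Axm}

/-- Wrap a derivation in vacuous substitutions `[x/x]`, binding each
variable of the list `l` once. -/
noncomputable def wrapAll {t u : Tm} (d : Deriv Ax t u) :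
    (l : List ℕ) →
    { d' : Deriv Ax t u //
      (d.VNFax → d'.VNFax) ∧ d'.bvars = l ++ d.bvars ∧
      d'.varsOf = d.varsOf ∪ l.toFinset ∧
      d'.lh = d.lh + l.length * (2 * (t.lh + u.lh) + 7) }
  | [] => ⟨d, fun h => h, rfl, by simp, by simp⟩
  | x :: l => by
      obtain ⟨d', h1, h2, h3, h4⟩ := wrapAll d l
      refine ⟨Deriv.dcast (Tm.subst_self t x) (Tm.subst_self u x) (.subst (.var x) x d'),
        ?_, ?_, ?_, ?_⟩
      · exact fun h => (VNFax_dcast _ _ _).2 (h1 h)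
      · rw [bvars_dcast, show (Deriv.subst (Tm.var x) x d').bvars = x :: d'.bvars from rfl,
          h2]
        rfl
      · rw [varsOf_dcast, show (Deriv.subst (Tm.var x) x d').varsOf
          = d'.varsOf ∪ (Tm.var x).vars ∪ {x} from rfl, h3]
        ext v
        simp [Tm.vars]
      · rw [lh_dcast]
        have : (Deriv.subst (Tm.var x) x d').lh
            = d'.lh + ((t.subst x (Tm.var x)).lh + (u.subst x (Tm.var x)).lh + 1)
              + (t.lh + (Tm.var x).lh + 1 + u.lh + (Tm.var x).lh + 1 + 2) := rfl
        rw [this, Tm.subst_self, Tm.subst_self, h4]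
        show _ = _ + (l.length + 1) * _
        have : (Tm.var x).lh = 1 := rfl
        rw [this]
        ring

end Deriv

theorem vnf_exists' :
    ∀ (Ax : Set Axm), ∀ {t u : Tm} (d : Deriv Ax t u),
      ∃ d' : Deriv Ax t u, d'.VNF ∧ d'.lh ≤ 100 * d.lh ^ 2 := by
  intro Ax t u d
  set n₀ : ℕ := (d.varsOf.sup id) + 1 with hn₀
  have hn : ∀ v ∈ d.varsOf, v < n₀ := fun v hv =>
    Nat.lt_succ_of_le (Finset.le_sup (f := id) hv)
  obtain ⟨n', d₁, hle, hvnfax, hnd, hrange, hvo, hlh⟩ := Deriv.vnfAux d n₀ hn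
  classical
  set S : Finset ℕ := d₁.varsOf \ (t.vars ∪ u.vars ∪ d₁.bvars.toFinset) with hS
  obtain ⟨d₂, g1, g2, g3, g4⟩ := Deriv.wrapAll d₁ S.toList
  refine ⟨d₂, ⟨g1 hvnfax, ?_⟩, ?_⟩
  · -- variable condition of VNF
    intro x hx
    rw [g3] at hx
    by_cases hfin : x ∈ t.vars ∪ u.vars
    · exact Or.inl hfin
    · right
      have hx₁ : x ∈ d₁.varsOf := by
        rcases Finset.mem_union.1 hx with h | h
        · exact h
        · have hxs : x ∈ S := Finset.mem_toList.1 (List.mem_toFinset.1 h)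
          rw [hS, Finset.mem_sdiff] at hxs
          exact hxs.1
      rw [g2, List.count_append]
      by_cases hb : x ∈ d₁.bvars
      · have hxS : x ∉ S := by
          rw [hS]
          simp only [Finset.mem_sdiff, not_and, not_not]
          intro _
          exact Finset.mem_union_right _ (List.mem_toFinset.2 hb)
        rw [List.count_eq_zero_of_not_mem (fun hmem => hxS (Finset.mem_toList.1 hmem)),
          List.count_eq_one_of_mem hnd hb]
      · have hxS : x ∈ S := by
          rw [hS, Finset.mem_sdiff]
          refine ⟨hx₁, fun h => ?_⟩
          rcases Finset.mem_union.1 h with h | h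
          · exact hfin h
          · exact hb (List.mem_toFinset.1 h)
        rw [List.count_eq_one_of_mem (Finset.nodup_toList S) (Finset.mem_toList.2 hxS),
          List.count_eq_zero_of_not_mem hb]
  · -- length bound
    rw [g4]
    have hcard : S.toList.length ≤ d.lh := by
      rw [Finset.length_toList]
      have hsub : S ⊆ d.varsOf := by
        intro x hx
        rw [hS, Finset.mem_sdiff] at hx
        rcases hvo x hx.1 with h | h
        · exact h
        · exact absurd (Finset.mem_union_right _ (List.mem_toFinset.2 h)) hx.2
      exact (Finset.card_le_card hsub).trans d.card_varsOf_le_lh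
    have hconcl : t.lh + u.lh < d.lh := d.concl_lh_lt
    have hpos : 1 ≤ d.lh := by
      have := Tm.lh_pos t
      omega
    calc d₁.lh + S.toList.length * (2 * (t.lh + u.lh) + 7)
        ≤ 7 * d.lh ^ 2 + d.lh * (2 * d.lh + 7) := by
          refine Nat.add_le_add hlh ?_
          refine Nat.mul_le_mul hcard ?_
          omega
      _ ≤ 100 * d.lh ^ 2 := by nlinarith

/-- Variable Normal Form: there is a constant `C` such that
every `PETS(Ax)` derivation `d` of `t = u` can be transformed into a
derivation `d'` of `t = u` in Variable Normal Form with
`lh(d') ≤ C · lh(d)²`. -/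
theorem vnf_exists :
    ∃ C : ℕ, ∀ (Ax : Set Axm), NiceAxioms Ax → ∀ {t u : Tm} (d : Deriv Ax t u),
      ∃ d' : Deriv Ax t u, d'.VNF ∧ d'.lh ≤ C * d.lh ^ 2 := by
  refine ⟨100, fun Ax _ {t u} d => vnf_exists' Ax d⟩

end PETS
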